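/- MBE is a limiting case of WMBE: for nonnegative f, g : Fin d × Fin d → ℝ, the limit as w → 0⁺ of the WMBE upper bound ∑_y (∑_x f(x,y)^{1/(1−w)})^{1−w} (∑_x g(x,y)^{1/w})^{w} equals the mini-bucket bound ∑_y (∑_x f(x,y)) (max_x g(x,y)). -/
import Mathlib


open Finset Filter Topology

lemma aux_sup_limit (d : ℕ) [NeZero d] (a : Fin d → ℝ) (ha : ∀ x, 0 ≤ a x) :
    Tendsto (fun w : ℝ => (∑ x : Fin d, a x ^ (1 / w)) ^ w) (𝓝[>] (0:ℝ))
      (𝓝 (Finset.univ.sup' Finset.univ_nonempty a)) := by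
  set M := Finset.univ.sup' Finset.univ_nonempty a with hMdef
  obtain ⟨x0, -, hx0⟩ := Finset.exists_mem_eq_sup' (Finset.univ_nonempty (α := Fin d)) a
  have hM0 : 0 ≤ M := by rw [hMdef, hx0]; exact ha x0
  have hle : ∀ x : Fin d, a x ≤ M := fun x => Finset.le_sup' a (mem_univ x)
  have hd : (0:ℝ) < d := by
    have := NeZero.ne d
    positivity
  have hupper : Tendsto (fun w : ℝ => (d:ℝ) ^ w * M) (𝓝[>] 0) (𝓝 M) := by
    have h1 : Tendsto (fun w : ℝ => (d:ℝ) ^ w) (𝓝 (0:ℝ)) (𝓝 1) := by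
      have := (tendsto_const_nhds (x := (d:ℝ)) (f := 𝓝 (0:ℝ))).rpow
        tendsto_id (Or.inl hd.ne')
      simpa using this
    have := h1.mul (tendsto_const_nhds (x := M))
    rw [one_mul] at this
    exact this.mono_left nhdsWithin_le_nhds
  refine tendsto_of_tendsto_of_tendsto_of_le_of_le' tendsto_const_nhds hupper ?_ ?_
  · filter_upwards [self_mem_nhdsWithin] with w (hw : 0 < w)
    have h1 : M ^ (1/w) ≤ ∑ x : Fin d, a x ^ (1/w) := by
      rw [hMdef, hx0]
      exact Finset.single_le_sum (f := fun x => a x ^ (1/w))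
        (fun x _ => Real.rpow_nonneg (ha x) _) (mem_univ x0)
    calc M = (M ^ (1/w)) ^ w := by
            rw [← Real.rpow_mul hM0, one_div_mul_cancel hw.ne', Real.rpow_one]
      _ ≤ (∑ x : Fin d, a x ^ (1/w)) ^ w :=
          Real.rpow_le_rpow (Real.rpow_nonneg hM0 _) h1 hw.le
  · filter_upwards [self_mem_nhdsWithin] with w (hw : 0 < w)
    have h1 : ∑ x : Fin d, a x ^ (1/w) ≤ (d:ℝ) * M ^ (1/w) := by
      calc ∑ x : Fin d, a x ^ (1/w) ≤ ∑ _x : Fin d, M ^ (1/w) :=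
            Finset.sum_le_sum fun x _ =>
              Real.rpow_le_rpow (ha x) (hle x) (by positivity)
        _ = (d:ℝ) * M ^ (1/w) := by simp [mul_comm]
    calc (∑ x : Fin d, a x ^ (1/w)) ^ w ≤ ((d:ℝ) * M ^ (1/w)) ^ w :=
          Real.rpow_le_rpow (Finset.sum_nonneg fun x _ => Real.rpow_nonneg (ha x) _)
            h1 hw.le
      _ = (d:ℝ) ^ w * M := by
          rw [Real.mul_rpow hd.le (Real.rpow_nonneg hM0 _),
            ← Real.rpow_mul hM0, one_div_mul_cancel hw.ne', Real.rpow_one]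

lemma aux_sum_limit (d : ℕ) (a : Fin d → ℝ) (ha : ∀ x, 0 ≤ a x) :
    Tendsto (fun w : ℝ => (∑ x : Fin d, a x ^ (1 / (1 - w))) ^ (1 - w))
      (𝓝 (0:ℝ)) (𝓝 (∑ x : Fin d, a x)) := by
  have houter : Tendsto (fun w : ℝ => 1 - w) (𝓝 (0:ℝ)) (𝓝 1) := by
    have h : Continuous (fun w : ℝ => 1 - w) := continuous_const.sub continuous_id
    have := h.tendsto (0:ℝ)
    norm_num at this
    exact this
  have hexp : Tendsto (fun w : ℝ => 1 / (1 - w)) (𝓝 (0:ℝ)) (𝓝 1) := by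
    have h := houter.inv₀ one_ne_zero
    rw [inv_one] at h
    simpa [one_div] using h
  have hsum : Tendsto (fun w : ℝ => ∑ x : Fin d, a x ^ (1 / (1 - w)))
      (𝓝 (0:ℝ)) (𝓝 (∑ x : Fin d, a x)) := by
    have : ∀ x : Fin d, Tendsto (fun w : ℝ => a x ^ (1 / (1 - w)))
        (𝓝 (0:ℝ)) (𝓝 (a x)) := by
      intro x
      have := (tendsto_const_nhds (x := a x) (f := 𝓝 (0:ℝ))).rpow hexp
        (Or.inr one_pos)
      simpa using this
    exact tendsto_finset_sum _ fun x _ => this x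
  have := hsum.rpow houter (Or.inr one_pos)
  simpa using this

/-- MBE is a limiting case of WMBE: for nonnegative `f, g`, as `w → 0⁺` the
WMBE bound with weights `(1 - w, w)` tends to the mini-bucket bound
`∑ y (∑ x f(x,y)) (max_x g(x,y))`. -/
theorem mbe_limit_of_wmbe (d : ℕ) [NeZero d] (f g : Fin d × Fin d → ℝ)
    (hf : ∀ p, 0 ≤ f p) (hg : ∀ p, 0 ≤ g p) :
    Tendsto
      (fun w : ℝ => ∑ y : Fin d,
        (∑ x : Fin d, f (x, y) ^ (1 / (1 - w))) ^ (1 - w) *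
          (∑ x : Fin d, g (x, y) ^ (1 / w)) ^ w)
      (𝓝[>] 0)
      (𝓝 (∑ y : Fin d, (∑ x : Fin d, f (x, y)) *
        Finset.univ.sup' Finset.univ_nonempty (fun x : Fin d => g (x, y)))) := by
  refine tendsto_finset_sum _ fun y _ => ?_
  exact ((aux_sum_limit d (fun x => f (x, y)) (fun x => hf _)).mono_left
      nhdsWithin_le_nhds).mul
    (aux_sup_limit d (fun x => g (x, y)) (fun x => hg _))
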